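/- Let δ > 0 (playing the role of ε^{2p}) and a > 0, and set b = 2a + δ. Then there exists a unique T > 0 such that 2a e^{4T} − b e^{-2T} = δ; moreover T ≤ δ/(6a). -/

import Mathlib

/-- For `δ > 0`, `a > 0`, and `b = 2a + δ`, there is a unique `T > 0` with
`2a e^{4T} − b e^{-2T} = δ`; moreover any such `T` satisfies `T ≤ δ/(6a)`. -/
theorem stmt_14 (δ a : ℝ) (hδ : 0 < δ) (ha : 0 < a) (b : ℝ) (hb : b = 2 * a + δ) :
    (∃! T : ℝ, 0 < T ∧ 2 * a * Real.exp (4 * T) - b * Real.exp (-(2 * T)) = δ) ∧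
      ∀ T : ℝ, 0 < T → 2 * a * Real.exp (4 * T) - b * Real.exp (-(2 * T)) = δ →
        T ≤ δ / (6 * a) := by
  subst hb
  set f : ℝ → ℝ := fun T => 2 * a * Real.exp (4 * T) - (2 * a + δ) * Real.exp (-(2 * T))
    with hf
  have hfmono : StrictMono f := by
    intro s t hst
    have h1 : Real.exp (4 * s) < Real.exp (4 * t) := Real.exp_lt_exp.2 (by linarith)
    have h2 : Real.exp (-(2 * t)) < Real.exp (-(2 * s)) := Real.exp_lt_exp.2 (by linarith)
    have hp : (0:ℝ) < 2 * a + δ := by linarith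
    simp only [hf]
    nlinarith
  constructor
  · -- existence and uniqueness
    have hM0 : 0 < δ / (4 * a) := by positivity
    set M := δ / (4 * a) with hM
    have hMa : 4 * a * M = δ := by rw [hM]; field_simp
    have hf0 : f 0 = -δ := by simp [hf]
    have hfM : δ ≤ f M := by
      have h1 : 1 + 4 * M ≤ Real.exp (4 * M) := by
        have := Real.add_one_le_exp (4 * M); linarith
      have h2 : Real.exp (-(2 * M)) ≤ 1 := Real.exp_le_one_iff.2 (by linarith)
      have hp : (0:ℝ) < 2 * a + δ := by linarith
      simp only [hf]
      nlinarith
    have hcont : ContinuousOn f (Set.Icc 0 M) := by fun_prop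
    have hIVT := intermediate_value_Icc (le_of_lt hM0) hcont
    have hmem : δ ∈ Set.Icc (f 0) (f M) := ⟨by rw [hf0]; linarith, hfM⟩
    obtain ⟨T, hTmem, hTeq⟩ := hIVT hmem
    have hT0 : 0 < T := by
      rcases lt_or_eq_of_le hTmem.1 with h | h
      · exact h
      · exfalso; rw [← h] at hTeq; rw [hf0] at hTeq; linarith
    refine ⟨T, ⟨hT0, hTeq⟩, ?_⟩
    intro y ⟨hy0, hyeq⟩
    exact hfmono.injective (show f y = f T from hyeq.trans hTeq.symm)
  · -- bound
    intro T hT hEq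
    set u := Real.exp (2 * T) with hu
    have hu1 : 1 < u := by
      rw [hu, show (1:ℝ) = Real.exp 0 from Real.exp_zero.symm]
      exact Real.exp_lt_exp.2 (by linarith)
    have hupos : (0:ℝ) < u := by linarith
    have h4 : Real.exp (4 * T) = u * u := by
      rw [show (4:ℝ) * T = 2 * T + 2 * T by ring, Real.exp_add, hu]
    have hm : Real.exp (-(2 * T)) = u⁻¹ := by rw [hu, Real.exp_neg]
    rw [h4, hm] at hEq
    have key : 2 * a * (u * u * u) - (2 * a + δ) = δ * u := by
      field_simp at hEq
      nlinarith [hEq]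
    have hstep : 3 * a * (u - 1) ≤ δ := by
      nlinarith [mul_nonneg (mul_nonneg ha.le (sq_nonneg (u - 1)))
        (by linarith : (0:ℝ) ≤ 2 * u + 1), key]
    have hlog : 2 * T ≤ u - 1 := by
      have h1 : Real.log u ≤ u - 1 := Real.log_le_sub_one_of_pos hupos
      rw [hu, Real.log_exp] at h1; exact h1
    have hdiv : u - 1 ≤ δ / (3 * a) := by
      rw [le_div_iff₀ (by positivity)]; nlinarith
    have : δ / (3 * a) = 2 * (δ / (6 * a)) := by field_simp; ring
    linarith
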